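/- arXiv:1104.1054 — 2 statements merged into one kernel-verified Lean document; each statement's English description precedes it below -/
import Mathlib

section
/- Let E be a meet semilattice with zero, F a tight filter in E, X ⊆ F a finite nonempty subset, and Y a finite subset with Y ∩ F = ∅. Then there is a nonzero element e ∈ E with e ≤ x for all x ∈ X and e ∧ y = 0 for all y ∈ Y. -/
variable {E : Type*} [SemilatticeInf E] [OrderBot E]

/-- A filter in a meet semilattice with zero (`⊥`): a nonempty, downward
directed, upward closed subset not containing `⊥`. -/
def IsFilt (F : Set E) : Prop :=
  F.Nonempty ∧ (⊥ : E) ∉ F ∧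
  (∀ x ∈ F, ∀ y : E, x ≤ y → y ∈ F) ∧
  (∀ x ∈ F, ∀ y ∈ F, ∃ z ∈ F, z ≤ x ∧ z ≤ y)

/-- A finite subset of `a↓` is a cover of `a` if every nonzero `x ≤ a` meets
some element of it. -/
def IsCover (A : Finset E) (a : E) : Prop :=
  (∀ x ∈ A, x ≤ a) ∧ ∀ x : E, x ≠ ⊥ → x ≤ a → ∃ y ∈ A, x ⊓ y ≠ ⊥

/-- A filter is tight if it meets every finite cover of each of its elements. -/
def IsTight (F : Set E) : Prop :=
  IsFilt F ∧ ∀ a ∈ F, ∀ A : Finset E, IsCover A a → ∃ y ∈ A, y ∈ F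

/-- If `F` is a tight filter, `X ⊆ F` is finite and nonempty, and `Y` is a
finite set disjoint from `F`, then there is a nonzero element below every
element of `X` and orthogonal to every element of `Y`. -/
theorem tight_filter_separation (F : Set E) (hF : IsTight F)
    (X Y : Finset E) (hXne : X.Nonempty) (hXF : ∀ x ∈ X, x ∈ F)
    (hYF : ∀ y ∈ Y, y ∉ F) :
    ∃ e : E, e ≠ ⊥ ∧ (∀ x ∈ X, e ≤ x) ∧ ∀ y ∈ Y, e ⊓ y = ⊥ := by
  classical
  obtain ⟨⟨-, hbot, hup, hdir⟩, htight⟩ := hF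
  -- find a lower bound `a ∈ F` of `X`
  have key : ∀ (X : Finset E), X.Nonempty → (∀ x ∈ X, x ∈ F) →
      ∃ a ∈ F, ∀ x ∈ X, a ≤ x := by
    intro X hne hsub
    induction hne using Finset.Nonempty.cons_induction with
    | singleton x =>
      exact ⟨x, hsub x (by simp), by simp⟩
    | cons x s hx hs ih =>
      obtain ⟨a, haF, ha⟩ := ih (fun z hz => hsub z (Finset.mem_cons_of_mem hz))
      obtain ⟨z, hzF, hz1, hz2⟩ := hdir x (hsub x (Finset.mem_cons_self _ _)) a haF
      refine ⟨z, hzF, ?_⟩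
      intro w hw
      rcases Finset.mem_cons.mp hw with rfl | hw
      · exact hz1
      · exact hz2.trans (ha w hw)
  obtain ⟨a, haF, ha⟩ := key X hXne hXF
  have hnotcover : ¬ IsCover (Y.image (fun y => a ⊓ y)) a := by
    intro hc
    obtain ⟨b, hbA, hbF⟩ := htight a haF _ hc
    obtain ⟨y, hyY, rfl⟩ := Finset.mem_image.mp hbA
    exact hYF y hyY (hup _ hbF y inf_le_right)
  have hle : ∀ x ∈ Y.image (fun y => a ⊓ y), x ≤ a := by
    intro x hx
    obtain ⟨y, _, rfl⟩ := Finset.mem_image.mp hx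
    exact inf_le_left
  rw [IsCover] at hnotcover
  push_neg at hnotcover
  obtain ⟨e, hene, hea, he⟩ := hnotcover hle
  refine ⟨e, hene, fun x hx => hea.trans (ha x hx), fun y hy => ?_⟩
  have := he (a ⊓ y) (Finset.mem_image_of_mem _ hy)
  have h2 : e ⊓ y = e ⊓ (a ⊓ y) := by
    rw [← inf_assoc, inf_eq_left.mpr hea]
  rw [h2, this]
end

section
/- Let E be a meet semilattice with zero that is unambiguous (if e ∧ f ≠ 0 then e ≤ f or f ≤ e), pseudofinite, and satisfies the Dedekind height condition (for every nonzero e, the up-set e↑ is finite). Then every tight filter in E is an ultrafilter. -/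
variable {E : Type*} [SemilatticeInf E] [OrderBot E]

/-- An ultrafilter: a maximal filter. -/
def IsUltra (F : Set E) : Prop :=
  IsFilt F ∧ ∀ G : Set E, IsFilt G → F ⊆ G → G = F

private lemma key_aux
    (unamb : ∀ e f : E, e ⊓ f ≠ ⊥ → e ≤ f ∨ f ≤ e)
    (pseudofin : ∀ e : E, {g : E | g ⋖ e}.Finite)
    (pseudodense : ∀ e f : E, f < e → ∃ g : E, g ⋖ e ∧ f ≤ g)
    (dedekind : ∀ e : E, e ≠ ⊥ → {x : E | e ≤ x}.Finite)
    (F : Set E) (hF : IsTight F) :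
    ∀ n : ℕ, ∀ a ∈ F, ∀ b : E, b ≠ ⊥ → b ≤ a →
      (∀ c ∈ F, b ⊓ c ≠ ⊥) →
      Set.ncard {x : E | b ≤ x ∧ x ≤ a} ≤ n → b ∈ F := by
  classical
  obtain ⟨⟨hne, hbot, hup, hdir⟩, htight⟩ := hF
  intro n
  induction n with
  | zero =>
    intro a ha b hb hba _ hcard
    exfalso
    have hfin : {x : E | b ≤ x ∧ x ≤ a}.Finite :=
      (dedekind b hb).subset (fun x hx => hx.1)
    have hmem : a ∈ {x : E | b ≤ x ∧ x ≤ a} := ⟨hba, le_refl a⟩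
    have := (Set.ncard_pos hfin).mpr ⟨a, hmem⟩
    omega
  | succ n ih =>
    intro a ha b hb hba hmeet hcard
    rcases eq_or_lt_of_le hba with rfl | hlt
    · exact ha
    -- b < a : get a nonzero element directly below a above b
    obtain ⟨g₀, hg₀cov, hg₀b⟩ := pseudodense a b hlt
    have hg₀ne : g₀ ≠ ⊥ := fun h => hb (le_bot_iff.mp (h ▸ hg₀b))
    -- the cover: all nonzero elements directly below a
    set A : Finset E := (pseudofin a).toFinset.filter (· ≠ ⊥) with hA
    have hmemA : ∀ g : E, g ∈ A ↔ g ⋖ a ∧ g ≠ ⊥ := by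
      intro g; simp [hA, Set.Finite.mem_toFinset]
    have hcover : IsCover A a := by
      constructor
      · intro x hx
        exact ((hmemA x).mp hx).1.le
      · intro x hx hxa
        rcases eq_or_lt_of_le hxa with rfl | hxlt
        · refine ⟨g₀, (hmemA g₀).mpr ⟨hg₀cov, hg₀ne⟩, ?_⟩
          rwa [inf_eq_right.mpr hg₀cov.le]
        · obtain ⟨g, hgcov, hxg⟩ := pseudodense a x hxlt
          have hgne : g ≠ ⊥ := fun h => hx (le_bot_iff.mp (h ▸ hxg))
          refine ⟨g, (hmemA g).mpr ⟨hgcov, hgne⟩, ?_⟩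
          rwa [inf_eq_left.mpr hxg]
    obtain ⟨y, hyA, hyF⟩ := htight a ha A hcover
    obtain ⟨hycov, _⟩ := (hmemA y).mp hyA
    -- compare b and y
    rcases unamb b y (hmeet y hyF) with hby | hyb
    · rcases eq_or_lt_of_le hby with rfl | hblt
      · exact hyF
      · -- recurse with a := y
        apply ih y hyF b hb hby hmeet
        have hfin : {x : E | b ≤ x ∧ x ≤ a}.Finite :=
          (dedekind b hb).subset (fun x hx => hx.1)
        have hss : {x : E | b ≤ x ∧ x ≤ y} ⊂ {x : E | b ≤ x ∧ x ≤ a} := by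
          constructor
          · intro x hx
            exact ⟨hx.1, hx.2.trans hycov.le⟩
          · intro hsub
            have : a ∈ {x : E | b ≤ x ∧ x ≤ y} :=
              hsub ⟨hba, le_refl a⟩
            exact absurd this.2 (not_le_of_gt hycov.lt)
        have := Set.ncard_lt_ncard hss hfin
        omega
    · -- y ≤ b ≤ a, y ⋖ a ⇒ b = y or b = a
      rcases hycov.eq_or_eq hyb hba with h | h
      · exact h ▸ hyF
      · exact absurd h (ne_of_lt hlt)

/-- If `E` is unambiguous, pseudofinite and satisfies the Dedekind height
condition, then every tight filter in `E` is an ultrafilter. -/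
theorem tight_is_ultra_of_unambiguous
    (unamb : ∀ e f : E, e ⊓ f ≠ ⊥ → e ≤ f ∨ f ≤ e)
    (pseudofin : ∀ e : E, {g : E | g ⋖ e}.Finite)
    (pseudodense : ∀ e f : E, f < e → ∃ g : E, g ⋖ e ∧ f ≤ g)
    (dedekind : ∀ e : E, e ≠ ⊥ → {x : E | e ≤ x}.Finite)
    (F : Set E) (hF : IsTight F) : IsUltra F := by
  obtain ⟨hfilt, htight⟩ := hF
  refine ⟨hfilt, fun G hG hFG => ?_⟩
  obtain ⟨hne, hbot, hup, hdir⟩ := hfilt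
  obtain ⟨hGne, hGbot, hGup, hGdir⟩ := hG
  apply Set.eq_of_subset_of_subset _ hFG
  intro b hbG
  have hb : b ≠ ⊥ := fun h => hGbot (h ▸ hbG)
  -- b meets every element of F
  have hmeet : ∀ c ∈ F, b ⊓ c ≠ ⊥ := by
    intro c hc hcontra
    obtain ⟨z, hzG, hzb, hzc⟩ := hGdir b hbG c (hFG hc)
    have : z ≤ ⊥ := hcontra ▸ le_inf hzb hzc
    exact hGbot (le_bot_iff.mp this ▸ hzG)
  obtain ⟨a, ha⟩ := hne
  rcases unamb a b (by rw [inf_comm]; exact hmeet a ha) with hab | hba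
  · exact hup a ha b hab
  · exact key_aux unamb pseudofin pseudodense dedekind F ⟨⟨⟨a, ha⟩, hbot, hup, hdir⟩, htight⟩
      (Set.ncard {x : E | b ≤ x ∧ x ≤ a}) a ha b hb hba hmeet le_rfl
end
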